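/- arXiv:0712.3018 — 4 statements merged into one kernel-verified Lean document; each statement's English description precedes it below -/
import Mathlib

section
/- Let I be a finite index set partitioned into three disjoint subsets L, D, R. Let M be a real symmetric positive-definite I × I matrix with M x y = 0 whenever one of x, y lies in L and the other in R. Then det M = det(M_LL) · det(N) · det(M_RR), where N = M_DD − M_DL (M_LL)⁻¹ M_LD − M_DR (M_RR)⁻¹ M_RD is the Neumann jump operator (the Schur complement of the (L ∪ R)-block). -/
open Matrix

/-- The block of a matrix corresponding to two finite index subsets. -/
def finsetBlock {I : Type*} (M : Matrix I I ℝ) (S T : Finset I) : Matrix ↥S ↥T ℝ :=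
  M.submatrix (fun i => (i : I)) (fun j => (j : I))

lemma posDef_submatrix_inj {n m : Type*} [Fintype n] [Fintype m] [DecidableEq n] [DecidableEq m]
    {M : Matrix n n ℝ} (hM : M.PosDef) {e : m → n} (he : Function.Injective e) :
    (M.submatrix e e).PosDef := by
  refine PosDef.of_dotProduct_mulVec_pos (hM.1.submatrix e) fun x hx => ?_
  set y : n → ℝ := fun i => ∑ k : m, if e k = i then x k else 0 with hy
  have hy0 : y ≠ 0 := by
    obtain ⟨k0, hk0⟩ := Function.ne_iff.mp hx
    intro h
    apply hk0
    have := congrFun h (e k0)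
    simpa [hy, Finset.sum_ite_eq', he.eq_iff] using this
  have key : star x ⬝ᵥ (M.submatrix e e) *ᵥ x = star y ⬝ᵥ M *ᵥ y := by
    simp only [dotProduct, mulVec, hy, star, submatrix_apply, id]
    have inner : ∀ i, ∑ j, M i j * ∑ k : m, (if e k = j then x k else 0)
        = ∑ k : m, M i (e k) * x k := by
      intro i
      simp only [Finset.mul_sum, mul_ite, mul_zero]
      rw [Finset.sum_comm]
      simp [Finset.sum_ite_eq']
    simp only [inner]
    rw [eq_comm]
    simp only [Finset.sum_mul, ite_mul, zero_mul]
    rw [Finset.sum_comm]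
    simp [Finset.sum_ite_eq']
  rw [key]
  exact hM.dotProduct_mulVec_pos hy0

/-- If `I` is partitioned into `L ⊔ D ⊔ R` and the symmetric positive definite matrix `M`
has no entries linking `L` and `R`, then `det M = det M_LL ⬝ det N ⬝ det M_RR`, where `N`
is the Neumann jump operator (Schur complement of the `(L ∪ R)`-block). -/
theorem stmt_0 {I : Type*} [Fintype I] [DecidableEq I]
    (L D R : Finset I)
    (hLD : Disjoint L D) (hLR : Disjoint L R) (hDR : Disjoint D R)
    (hcover : L ∪ D ∪ R = Finset.univ)
    (M : Matrix I I ℝ) (hM : M.PosDef)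
    (hzero : ∀ x y : I, (x ∈ L ∧ y ∈ R) ∨ (x ∈ R ∧ y ∈ L) → M x y = 0) :
    M.det =
      (finsetBlock M L L).det *
        (finsetBlock M D D
          - finsetBlock M D L * (finsetBlock M L L)⁻¹ * finsetBlock M L D
          - finsetBlock M D R * (finsetBlock M R R)⁻¹ * finsetBlock M R D).det *
      (finsetBlock M R R).det := by
  classical
  -- the gluing map
  set q : (↥L ⊕ ↥R) ⊕ ↥D → I := Sum.elim (Sum.elim (↑·) (↑·)) (↑·) with hq
  have hqinj : Function.Injective q := by
    rintro ((a | a) | a) ((b | b) | b) h <;>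
      simp only [hq, Sum.elim_inl, Sum.elim_inr] at h <;>
      first
      | exact congrArg Sum.inl (congrArg Sum.inl (Subtype.ext h))
      | exact congrArg Sum.inl (congrArg Sum.inr (Subtype.ext h))
      | exact congrArg Sum.inr (Subtype.ext h)
      | exact absurd h (hLR.forall_ne_finset a.2 b.2)
      | exact absurd h (hLR.symm.forall_ne_finset a.2 b.2)
      | exact absurd h (hLD.forall_ne_finset a.2 b.2)
      | exact absurd h (hLD.symm.forall_ne_finset a.2 b.2)
      | exact absurd h (hDR.forall_ne_finset a.2 b.2)
      | exact absurd h (hDR.symm.forall_ne_finset a.2 b.2)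
  have hqsurj : Function.Surjective q := by
    intro i
    have : i ∈ L ∪ D ∪ R := hcover ▸ Finset.mem_univ i
    rcases Finset.mem_union.mp this with h | h
    · rcases Finset.mem_union.mp h with h | h
      · exact ⟨Sum.inl (Sum.inl ⟨i, h⟩), rfl⟩
      · exact ⟨Sum.inr ⟨i, h⟩, rfl⟩
    · exact ⟨Sum.inl (Sum.inr ⟨i, h⟩), rfl⟩
  set e : ((↥L ⊕ ↥R) ⊕ ↥D) ≃ I := Equiv.ofBijective q ⟨hqinj, hqsurj⟩ with he
  -- positive definiteness of the diagonal blocks and invertibility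
  have hLL : (finsetBlock M L L).PosDef := posDef_submatrix_inj hM Subtype.val_injective
  have hRR : (finsetBlock M R R).PosDef := posDef_submatrix_inj hM Subtype.val_injective
  haveI : Invertible (finsetBlock M L L) := hLL.isUnit.invertible
  haveI : Invertible (finsetBlock M R R) := hRR.isUnit.invertible
  haveI : Invertible (fromBlocks (finsetBlock M L L) 0 0 (finsetBlock M R R)) :=
    fromBlocksZero₂₁Invertible _ _ _
  -- the block decomposition of M
  have hblock : M.submatrix e e =
      fromBlocks (fromBlocks (finsetBlock M L L) 0 0 (finsetBlock M R R))
        (fromRows (finsetBlock M L D) (finsetBlock M R D))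
        (fromCols (finsetBlock M D L) (finsetBlock M D R))
        (finsetBlock M D D) := by
    ext i j
    rcases i with (a | a) | a <;> rcases j with (b | b) | b <;>
      simp only [submatrix_apply, he, Equiv.ofBijective_apply, hq, Sum.elim_inl, Sum.elim_inr,
        fromBlocks_apply₁₁, fromBlocks_apply₁₂, fromBlocks_apply₂₁, fromBlocks_apply₂₂,
        fromRows_apply_inl, fromRows_apply_inr, fromCols_apply_inl, fromCols_apply_inr,
        finsetBlock, Matrix.zero_apply]
    all_goals first
      | rfl
      | exact hzero _ _ (Or.inl ⟨a.2, b.2⟩)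
      | exact hzero _ _ (Or.inr ⟨a.2, b.2⟩)
  have hdet : M.det = (M.submatrix e e).det := (det_submatrix_equiv_self e M).symm
  rw [hdet, hblock, det_fromBlocks₁₁]
  rw [invOf_fromBlocks_zero₂₁_eq]
  rw [det_fromBlocks_zero₂₁]
  rw [Matrix.mul_zero, Matrix.zero_mul, neg_zero]
  rw [fromCols_mul_fromBlocks]
  simp only [Matrix.mul_zero, add_zero, zero_add]
  rw [fromCols_mul_fromRows, invOf_eq_nonsing_inv, invOf_eq_nonsing_inv, sub_add_eq_sub_sub]
  ring
end

section
/- Let φ_∂ : ∂ → ℝ and let m : V → ℝ be harmonic on V° (i.e. (Δm)(x) = 0 for all x ∈ V°) with m restricted to ∂ equal to φ_∂. Then ∫_{ℝ^{V°}} exp(−½ ⟨φ ∪ φ_∂, φ ∪ φ_∂⟩) ∏_{x ∈ V°} dφ(x)/√(2π) = det(Δ°)^{−1/2} · exp(−½ ⟨m, m⟩), where φ ∪ φ_∂ : V → ℝ denotes the function equal to φ on V° and to φ_∂ on ∂. (This identifies the partition function of the discrete free field with boundary condition φ_∂.) -/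
open MeasureTheory Finset

/-- Dirichlet energy `⟨f, f⟩ = Σ_{{x,y} ∈ E} (f(x) − f(y))²` of a function on the vertices of
a finite simple graph (each unordered edge counted once). -/
noncomputable def dirichletEnergy {V : Type*} [Fintype V] (G : SimpleGraph V) [DecidableRel G.Adj]
    (f : V → ℝ) : ℝ :=
  (1 / 2) * ∑ x : V, ∑ y : V, if G.Adj x y then (f x - f y) ^ 2 else 0

/-- The Dirichlet combinatorial Laplacian `Δ°` on the interior `V° = V ∖ ∂`:
`(Δ°)_{xy} = deg x` if `x = y`, `−1` if `x ∼ y`, and `0` otherwise. -/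
noncomputable def dirichletLaplacian {V : Type*} [Fintype V] [DecidableEq V] (G : SimpleGraph V)
    [DecidableRel G.Adj] (bd : Finset V) : Matrix ↥bdᶜ ↥bdᶜ ℝ :=
  fun x y => if (x : V) = (y : V) then (G.degree (x : V) : ℝ)
    else if G.Adj (x : V) (y : V) then -1 else 0

/- ### Auxiliary lemmas -/

open Matrix
open scoped MatrixOrder

lemma gauss_quad {ι : Type*} [Fintype ι] [DecidableEq ι] (A : Matrix ι ι ℝ)
    (hA : A.PosDef) :
    (∫ x : ι → ℝ, Real.exp (-(1 / 2) * (x ⬝ᵥ A *ᵥ x)))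
      = Real.sqrt ((2 * Real.pi) ^ Fintype.card ι) * (Real.sqrt A.det)⁻¹ := by
  set S := CFC.sqrt A with hSdef
  have hS : S.PosSemidef := Matrix.nonneg_iff_posSemidef.mp (CFC.sqrt_nonneg A)
  have hSS : S * S = A := CFC.sqrt_mul_sqrt_self A hA.posSemidef.nonneg
  have hT : Sᵀ = S := by
    have := hS.1.eq
    rwa [Matrix.conjTranspose_eq_transpose_of_trivial] at this
  have hdet2 : S.det * S.det = A.det := by rw [← Matrix.det_mul, hSS]
  have hU1 : (hA.posSemidef.1.eigenvectorUnitary.1 : Matrix ι ι ℝ) *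
      (star hA.posSemidef.1.eigenvectorUnitary.1) = 1 :=
    Unitary.mul_star_self_of_mem hA.posSemidef.1.eigenvectorUnitary.2
  have hdetS : S.det = Real.sqrt A.det := by
    rw [hSdef, hA.posSemidef.det_sqrt, RCLike.sqrt_real]
  have hdetnn : 0 ≤ S.det := by
    rw [hdetS]; exact Real.sqrt_nonneg _
  have hdetA : Real.sqrt A.det = S.det := by
    rw [← hdet2, ← pow_two, Real.sqrt_sq hdetnn]
  have hdetne : S.det ≠ 0 := by
    intro h; have := hA.det_pos; rw [← hdet2, h, mul_zero] at this; exact lt_irrefl _ this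
  have hquad : ∀ x : ι → ℝ, x ⬝ᵥ A *ᵥ x = (S *ᵥ x) ⬝ᵥ (S *ᵥ x) := by
    intro x
    rw [← hSS, ← Matrix.mulVec_mulVec, Matrix.dotProduct_mulVec, ← Matrix.mulVec_transpose, hT]
  have hdetlin : LinearMap.det (Matrix.toLin' S) = S.det := LinearMap.det_toLin' S
  have hmap : Measure.map (Matrix.toLin' S) (volume : Measure (ι → ℝ))
      = ENNReal.ofReal |(S.det)⁻¹| • volume := by
    have := Measure.map_linearMap_addHaar_eq_smul_addHaar
      (μ := (volume : Measure (ι → ℝ))) (f := Matrix.toLin' S)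
      (by rw [hdetlin]; exact hdetne)
    rwa [hdetlin] at this
  have hg : Continuous fun y : ι → ℝ => Real.exp (-(1/2) * (y ⬝ᵥ y)) := by
    apply Real.continuous_exp.comp
    exact (continuous_const.mul (continuous_finset_sum _ fun i _ =>
      ((continuous_apply i).mul (continuous_apply i))))
  have key : (∫ x : ι → ℝ, Real.exp (-(1 / 2) * (x ⬝ᵥ A *ᵥ x)))
      = |S.det⁻¹| * ∫ y : ι → ℝ, Real.exp (-(1/2) * (y ⬝ᵥ y)) := by
    have h := MeasureTheory.integral_map (μ := (volume : Measure (ι → ℝ)))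
      (φ := Matrix.toLin' S) (f := fun y : ι → ℝ => Real.exp (-(1/2) * (y ⬝ᵥ y)))
      ((Matrix.toLin' S).continuous_of_finiteDimensional.measurable.aemeasurable)
      (hg.aestronglyMeasurable)
    rw [hmap, integral_smul_measure] at h
    simp only [ENNReal.toReal_ofReal (abs_nonneg _), Matrix.toLin'_apply] at h
    simp_rw [hquad]
    rw [← h, smul_eq_mul]
  rw [key]
  have hsplit : ∀ y : ι → ℝ, Real.exp (-(1/2) * (y ⬝ᵥ y))
      = ∏ i, Real.exp (-(1/2) * (y i)^2) := by
    intro y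
    rw [← Real.exp_sum]
    congr 1
    rw [dotProduct, Finset.mul_sum]
    congr 1; ext i; ring
  simp_rw [hsplit]
  erw [MeasureTheory.integral_fintype_prod_eq_pow (ι := ι) (fun t : ℝ => Real.exp (-(1/2) * t^2))
    (μ := volume)]
  have h1 : (∫ t : ℝ, Real.exp (-(1/2) * t^2)) = Real.sqrt (2 * Real.pi) := by
    rw [integral_gaussian, show (Real.pi/(1/2):ℝ) = 2*Real.pi by ring]
  have h2π : (0:ℝ) ≤ 2 * Real.pi := by positivity
  have hpow : Real.sqrt ((2*Real.pi) ^ Fintype.card ι)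
      = (Real.sqrt (2*Real.pi)) ^ Fintype.card ι := by
    rw [← Real.sqrt_sq (pow_nonneg (Real.sqrt_nonneg _) _)]
    congr 1
    rw [← pow_mul, mul_comm (Fintype.card ι) 2, pow_mul, Real.sq_sqrt h2π]
  rw [h1, hpow, hdetA, abs_inv, abs_of_nonneg hdetnn]
  ring

lemma sum_ite_adj {V : Type*} [Fintype V] (G : SimpleGraph V) [DecidableRel G.Adj]
    (x : V) (c : ℝ) :
    (∑ y : V, if G.Adj x y then c else 0) = (G.degree x : ℝ) * c := by
  rw [Finset.sum_ite, Finset.sum_const_zero, add_zero, Finset.sum_const, nsmul_eq_mul]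
  congr 1
  rw [SimpleGraph.degree, SimpleGraph.neighborFinset_eq_filter]

/-- Energy splitting: if `g` vanishes on the boundary and `m` is harmonic in the interior,
the Dirichlet energy of `m + g` is the sum of energies. -/
lemma energy_split {V : Type*} [Fintype V] [DecidableEq V] (G : SimpleGraph V)
    [DecidableRel G.Adj] (bd : Finset V) (m g : V → ℝ)
    (hg : ∀ x ∈ bd, g x = 0)
    (hharm : ∀ x : V, x ∉ bd → (∑ y : V, if G.Adj x y then m x - m y else 0) = 0) :
    dirichletEnergy G (fun x => m x + g x) = dirichletEnergy G m + dirichletEnergy G g := by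
  unfold dirichletEnergy
  have expand : ∀ x y : V,
      (if G.Adj x y then ((m x + g x) - (m y + g y)) ^ 2 else 0)
      = ((if G.Adj x y then (m x - m y) ^ 2 else 0)
          + (if G.Adj x y then (g x - g y) ^ 2 else 0))
        + 2 * ((if G.Adj x y then m x - m y else 0) * g x
            - (if G.Adj x y then m x - m y else 0) * g y) := by
    intro x y
    by_cases h : G.Adj x y <;> simp [h] <;> ring
  simp_rw [expand, Finset.sum_add_distrib, ← Finset.mul_sum (a := (2:ℝ)),
    Finset.sum_sub_distrib]
  have hT1 : (∑ x : V, ∑ y : V, (if G.Adj x y then m x - m y else 0) * g x) = 0 := by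
    apply Finset.sum_eq_zero
    intro x _
    rw [← Finset.sum_mul]
    by_cases hx : x ∈ bd
    · rw [hg x hx, mul_zero]
    · rw [hharm x hx, zero_mul]
  have hT2 : (∑ x : V, ∑ y : V, (if G.Adj x y then m x - m y else 0) * g y) = 0 := by
    rw [Finset.sum_comm]
    apply Finset.sum_eq_zero
    intro y _
    rw [← Finset.sum_mul]
    by_cases hy : y ∈ bd
    · rw [hg y hy, mul_zero]
    · have : (∑ x : V, if G.Adj x y then m x - m y else 0)
          = -(∑ x : V, if G.Adj y x then m y - m x else 0) := by
        rw [← Finset.sum_neg_distrib]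
        apply Finset.sum_congr rfl
        intro x _
        by_cases h : G.Adj x y
        · rw [if_pos h, if_pos h.symm]; ring
        · rw [if_neg h, if_neg (fun hc => h hc.symm), neg_zero]
      rw [this, hharm y hy, neg_zero, zero_mul]
  rw [hT1, hT2]
  ring

/-- Quadratic-form expression of the Dirichlet energy of a function vanishing on the boundary. -/
lemma energy_quadform {V : Type*} [Fintype V] [DecidableEq V] (G : SimpleGraph V)
    [DecidableRel G.Adj] (bd : Finset V) (g : V → ℝ)
    (hg : ∀ x ∈ bd, g x = 0) :
    dirichletEnergy G g
      = (fun x : ↥bdᶜ => g x) ⬝ᵥ (dirichletLaplacian G bd) *ᵥ (fun x : ↥bdᶜ => g x) := by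
  classical
  set B : V → V → ℝ := fun x y =>
    g x * ((if x = y then (G.degree x : ℝ) else if G.Adj x y then -1 else 0) * g y) with hB
  have hzero : ∀ x y : V, x ∈ bd ∨ y ∈ bd → B x y = 0 := by
    intro x y h
    rcases h with h | h <;> simp [hB, hg _ h]
  have hinner : ∀ x : V, (∑ y ∈ bdᶜ, B x y) = ∑ y : V, B x y := by
    intro x
    apply Finset.sum_subset (Finset.subset_univ _)
    intro y _ hy
    exact hzero x y (Or.inr (by simpa using hy))
  have hstep1 : (fun x : ↥bdᶜ => g x) ⬝ᵥ (dirichletLaplacian G bd) *ᵥ (fun x : ↥bdᶜ => g x)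
      = ∑ x : V, ∑ y : V, B x y := by
    have e1 : (fun x : ↥bdᶜ => g x) ⬝ᵥ (dirichletLaplacian G bd) *ᵥ (fun x : ↥bdᶜ => g x)
        = ∑ x : ↥bdᶜ, ∑ y : ↥bdᶜ, B ↑x ↑y := by
      simp only [dotProduct, Matrix.mulVec, dirichletLaplacian, hB, Finset.mul_sum]
    rw [e1]
    calc ∑ x : ↥bdᶜ, ∑ y : ↥bdᶜ, B ↑x ↑y
        = ∑ x : ↥bdᶜ, ∑ y ∈ bdᶜ, B ↑x y := by
          exact Finset.sum_congr rfl fun x _ => Finset.sum_coe_sort _ _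
      _ = ∑ x ∈ bdᶜ, ∑ y ∈ bdᶜ, B x y :=
          Finset.sum_coe_sort (bdᶜ) (fun x => ∑ y ∈ bdᶜ, B x y)
      _ = ∑ x ∈ bdᶜ, ∑ y : V, B x y := Finset.sum_congr rfl fun x _ => hinner x
      _ = ∑ x : V, ∑ y : V, B x y := by
          apply Finset.sum_subset (Finset.subset_univ _)
          intro x _ hx
          exact Finset.sum_eq_zero fun y _ => hzero x y (Or.inl (by simpa using hx))
  rw [hstep1]
  have hBsplit : ∀ x y : V, B x y
      = (if x = y then (G.degree x : ℝ) * g x * g y else 0)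
        + (if G.Adj x y then -(g x * g y) else 0) := by
    intro x y
    by_cases hxy : x = y
    · subst hxy
      simp [hB, SimpleGraph.irrefl]
      ring
    · by_cases h : G.Adj x y <;> simp [hB, hxy, h] <;> ring
  simp_rw [hBsplit, Finset.sum_add_distrib]
  have hdiag : (∑ x : V, ∑ y : V, if x = y then (G.degree x : ℝ) * g x * g y else 0)
      = ∑ x : V, (G.degree x : ℝ) * g x ^ 2 := by
    apply Finset.sum_congr rfl
    intro x _
    rw [Finset.sum_ite_eq univ x (fun y => (G.degree x : ℝ) * g x * g y)]
    simp; ring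
  rw [hdiag]
  unfold dirichletEnergy
  have hexp : ∀ x y : V, (if G.Adj x y then (g x - g y) ^ 2 else 0)
      = (if G.Adj x y then g x ^ 2 else 0) + (if G.Adj x y then g y ^ 2 else 0)
        + 2 * (if G.Adj x y then -(g x * g y) else 0) := by
    intro x y
    by_cases h : G.Adj x y <;> simp [h] <;> ring
  simp_rw [hexp, Finset.sum_add_distrib, ← Finset.mul_sum (a := (2:ℝ))]
  have hswap : (∑ x : V, ∑ y : V, if G.Adj x y then g y ^ 2 else 0)
      = ∑ x : V, ∑ y : V, if G.Adj x y then g x ^ 2 else 0 := by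
    rw [Finset.sum_comm]
    apply Finset.sum_congr rfl
    intro x _
    apply Finset.sum_congr rfl
    intro y _
    by_cases h : G.Adj x y
    · rw [if_pos h, if_pos h.symm]
    · rw [if_neg h, if_neg (fun hc => h hc.symm)]
  have hdeg : (∑ x : V, ∑ y : V, if G.Adj x y then g x ^ 2 else 0)
      = ∑ x : V, (G.degree x : ℝ) * g x ^ 2 := by
    apply Finset.sum_congr rfl
    intro x _
    exact sum_ite_adj G x _
  rw [hswap, hdeg]
  ring

/-- Partition function of the discrete free field with boundary condition `φ_∂`:
if `m` is the harmonic extension of `φ_∂`, then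
`∫ exp(−½⟨φ ∪ φ_∂, φ ∪ φ_∂⟩) ∏_{x ∈ V°} dφ(x)/√(2π) = det(Δ°)^{−1/2} exp(−½⟨m, m⟩)`. -/
theorem stmt_1 {V : Type*} [Fintype V] [DecidableEq V] (G : SimpleGraph V)
    [DecidableRel G.Adj] (bd : Finset V) (hbd : bd.Nonempty)
    (hPD : (dirichletLaplacian G bd).PosDef)
    (φb : ↥bd → ℝ) (m : V → ℝ)
    (hmb : ∀ x : ↥bd, m (x : V) = φb x)
    (hharm : ∀ x : V, x ∉ bd → (∑ y : V, if G.Adj x y then m x - m y else 0) = 0) :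
    (∫ φ : ↥bdᶜ → ℝ,
        Real.exp (-(1 / 2) * dirichletEnergy G (fun x : V =>
          if h : x ∈ bd then φb ⟨x, h⟩ else φ ⟨x, Finset.mem_compl.mpr h⟩)))
      = Real.sqrt ((2 * Real.pi) ^ Fintype.card ↥bdᶜ) *
          ((Real.sqrt (dirichletLaplacian G bd).det)⁻¹ *
            Real.exp (-(1 / 2) * dirichletEnergy G m)) := by
  classical
  set A := dirichletLaplacian G bd with hA
  set mc : ↥bdᶜ → ℝ := fun x => m ↑x with hmc
  -- the function `g` associated to an interior configuration `φ`
  set gf : (↥bdᶜ → ℝ) → V → ℝ := fun φ x =>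
    if h : x ∈ bd then 0 else φ ⟨x, Finset.mem_compl.mpr h⟩ - m x with hgf
  have hgbd : ∀ φ : ↥bdᶜ → ℝ, ∀ x ∈ bd, gf φ x = 0 := by
    intro φ x hx; simp [hgf, hx]
  have hext : ∀ φ : ↥bdᶜ → ℝ,
      (fun x : V => if h : x ∈ bd then φb ⟨x, h⟩ else φ ⟨x, Finset.mem_compl.mpr h⟩)
      = fun x => m x + gf φ x := by
    intro φ
    funext x
    by_cases h : x ∈ bd
    · simp [hgf, h, hmb ⟨x, h⟩]
    · simp [hgf, h]
  have hrestrict : ∀ φ : ↥bdᶜ → ℝ,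
      (fun x : ↥bdᶜ => gf φ ↑x) = φ - mc := by
    intro φ
    funext x
    have hx : (x : V) ∉ bd := Finset.mem_compl.mp x.2
    simp [hgf, hx, hmc]
  have hinteg : ∀ φ : ↥bdᶜ → ℝ,
      Real.exp (-(1 / 2) * dirichletEnergy G (fun x : V =>
          if h : x ∈ bd then φb ⟨x, h⟩ else φ ⟨x, Finset.mem_compl.mpr h⟩))
      = Real.exp (-(1/2) * dirichletEnergy G m)
        * Real.exp (-(1/2) * ((φ - mc) ⬝ᵥ A *ᵥ (φ - mc))) := by
    intro φ
    rw [hext φ, energy_split G bd m (gf φ) (hgbd φ) hharm,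
      energy_quadform G bd (gf φ) (hgbd φ), hrestrict φ, ← Real.exp_add]
    congr 1
    ring
  simp_rw [hinteg]
  rw [MeasureTheory.integral_const_mul]
  rw [show (∫ φ : ↥bdᶜ → ℝ, Real.exp (-(1/2) * ((φ - mc) ⬝ᵥ A *ᵥ (φ - mc))))
      = ∫ φ : ↥bdᶜ → ℝ, Real.exp (-(1/2) * (φ ⬝ᵥ A *ᵥ φ)) from
    MeasureTheory.integral_sub_right_eq_self
      (fun φ : ↥bdᶜ → ℝ => Real.exp (-(1/2) * (φ ⬝ᵥ A *ᵥ φ))) mc]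
  rw [gauss_quad A hPD]
  ring
end

section
/- The D × D block of the inverse matrix M⁻¹ equals the inverse of the Neumann jump operator: (M⁻¹)_DD = N⁻¹. (The covariance of the trace of the discrete free field on the separator D is the inverse of the Neumann jump operator.) -/
open Matrix

/-- A principal submatrix of a positive definite real matrix along an injective map is
positive definite. -/
lemma posDef_submatrix_of_injective {n m : Type*} [Fintype n] [Fintype m]
    {M : Matrix n n ℝ} (hM : M.PosDef) (e : m → n) (he : Function.Injective e) :
    (M.submatrix e e).PosDef := by
  classical
  rw [posDef_iff_dotProduct_mulVec]
  refine ⟨hM.1.submatrix e, ?_⟩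
  intro x hx
  set y : n → ℝ := Function.extend e x 0 with hy
  have hye : ∀ j, y (e j) = x j := fun j => he.extend_apply x 0 j
  have hy0 : ∀ i, (¬ ∃ j, e j = i) → y i = 0 := fun i h => by
    simp [hy, Function.extend_apply' _ _ _ h]
  have hdot : ∀ v : n → ℝ, y ⬝ᵥ v = ∑ j, x j * v (e j) := by
    intro v
    rw [dotProduct]
    rw [show (Finset.univ : Finset n) = (Finset.univ.image e) ∪ (Finset.univ.image e)ᶜ by
      simp]
    rw [Finset.sum_union (disjoint_compl_right)]
    have h2 : ∑ i ∈ (Finset.univ.image e)ᶜ, y i * v i = 0 := by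
      refine Finset.sum_eq_zero fun i hi => ?_
      rw [Finset.mem_compl, Finset.mem_image] at hi
      rw [hy0 i (by simpa using hi)]
      ring
    rw [h2, add_zero, Finset.sum_image (fun a _ b _ h => he h)]
    simp [hye]
  have hrow : ∀ j, (M *ᵥ y) (e j) = ∑ k, M (e j) (e k) * x k := by
    intro j
    have h1 : (M *ᵥ y) (e j) = y ⬝ᵥ fun k => M (e j) k := by
      simp [mulVec, dotProduct, mul_comm]
    rw [h1, hdot]
    exact Finset.sum_congr rfl fun k _ => mul_comm _ _
  have hRHS : star x ⬝ᵥ ((M.submatrix e e) *ᵥ x) = ∑ j, x j * ∑ k, M (e j) (e k) * x k := by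
    simp [dotProduct, mulVec]
  have hquad : y ⬝ᵥ (M *ᵥ y) = star x ⬝ᵥ ((M.submatrix e e) *ᵥ x) := by
    rw [hdot, hRHS]
    exact Finset.sum_congr rfl fun j _ => by rw [hrow j]
  have hy_ne : y ≠ 0 := by
    intro h
    apply hx
    funext j
    have := congrFun h (e j)
    simpa [hye j] using this
  have := hM.dotProduct_mulVec_pos hy_ne
  rw [star_trivial] at this
  rw [← hquad]
  exact this

/-- The `D × D` block of `M⁻¹` is the inverse of the Neumann jump operator
`N = M_DD − M_DL (M_LL)⁻¹ M_LD − M_DR (M_RR)⁻¹ M_RD`. -/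
theorem stmt_4 {I : Type*} [Fintype I] [DecidableEq I]
    (L D R : Finset I)
    (hLD : Disjoint L D) (hLR : Disjoint L R) (hDR : Disjoint D R)
    (hcover : L ∪ D ∪ R = Finset.univ)
    (M : Matrix I I ℝ) (hM : M.PosDef)
    (hzero : ∀ x y : I, (x ∈ L ∧ y ∈ R) ∨ (x ∈ R ∧ y ∈ L) → M x y = 0) :
    finsetBlock M⁻¹ D D =
      (finsetBlock M D D
        - finsetBlock M D L * (finsetBlock M L L)⁻¹ * finsetBlock M L D
        - finsetBlock M D R * (finsetBlock M R R)⁻¹ * finsetBlock M R D)⁻¹ := by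
  classical
  -- the reindexing map
  set f : (↥D ⊕ (↥L ⊕ ↥R)) → I :=
    Sum.elim (fun d => (d : I)) (Sum.elim (fun l => (l : I)) (fun r => (r : I))) with hf
  have hinj : Function.Injective f := by
    rintro (d₁ | l₁ | r₁) (d₂ | l₂ | r₂) h <;>
      simp only [hf, Sum.elim_inl, Sum.elim_inr] at h
    · exact congrArg Sum.inl (Subtype.ext h)
    · exact absurd (h ▸ l₂.2) (Finset.disjoint_right.mp hLD d₁.2)
    · exact absurd (h ▸ r₂.2) (Finset.disjoint_left.mp hDR d₁.2)
    · exact absurd (h ▸ d₂.2) (Finset.disjoint_left.mp hLD l₁.2)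
    · exact congrArg (Sum.inr ∘ Sum.inl) (Subtype.ext h)
    · exact absurd (h ▸ r₂.2) (Finset.disjoint_left.mp hLR l₁.2)
    · exact absurd (h ▸ d₂.2) (Finset.disjoint_right.mp hDR r₁.2)
    · exact absurd (h ▸ l₂.2) (Finset.disjoint_right.mp hLR r₁.2)
    · exact congrArg (Sum.inr ∘ Sum.inr) (Subtype.ext h)
  have hsurj : Function.Surjective f := by
    intro x
    have hx : x ∈ L ∪ D ∪ R := hcover ▸ Finset.mem_univ x
    rcases Finset.mem_union.mp hx with hx | hx
    · rcases Finset.mem_union.mp hx with hx | hx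
      · exact ⟨Sum.inr (Sum.inl ⟨x, hx⟩), rfl⟩
      · exact ⟨Sum.inl ⟨x, hx⟩, rfl⟩
    · exact ⟨Sum.inr (Sum.inr ⟨x, hx⟩), rfl⟩
  set e : (↥D ⊕ (↥L ⊕ ↥R)) ≃ I := Equiv.ofBijective f ⟨hinj, hsurj⟩ with he
  set A := finsetBlock M D D with hA
  set Bl := finsetBlock M D L with hBl
  set Br := finsetBlock M D R with hBr
  set Cl := finsetBlock M L D with hCl
  set Cr := finsetBlock M R D with hCr
  set All := finsetBlock M L L with hAll
  set Arr := finsetBlock M R R with hArr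
  set B : Matrix ↥D (↥L ⊕ ↥R) ℝ := fromCols Bl Br with hB
  set C : Matrix (↥L ⊕ ↥R) ↥D ℝ := fromRows Cl Cr with hC
  set Dm : Matrix (↥L ⊕ ↥R) (↥L ⊕ ↥R) ℝ := fromBlocks All 0 0 Arr with hDm
  have hsub : M.submatrix e e = fromBlocks A B C Dm := by
    ext (i | l | r) (j | l' | r') <;>
      simp only [he, hf, submatrix_apply, Equiv.ofBijective_apply, Sum.elim_inl, Sum.elim_inr,
        fromBlocks_apply₁₁, fromBlocks_apply₁₂, fromBlocks_apply₂₁, fromBlocks_apply₂₂,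
        hA, hB, hBl, hBr, hC, hCl, hCr, hDm, hAll, hArr, finsetBlock,
        fromCols_apply_inl, fromCols_apply_inr, fromRows_apply_inl, fromRows_apply_inr,
        of_apply, Matrix.zero_apply]
    · exact hzero _ _ (Or.inl ⟨l.2, r'.2⟩)
    · exact hzero _ _ (Or.inr ⟨r.2, l'.2⟩)
  -- positive definiteness / invertibility of the pieces
  have hAllpd : All.PosDef := posDef_submatrix_of_injective hM _ Subtype.val_injective
  have hArrpd : Arr.PosDef := posDef_submatrix_of_injective hM _ Subtype.val_injective
  letI : Invertible All := hAllpd.isUnit.invertible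
  letI : Invertible Arr := hArrpd.isUnit.invertible
  letI : Invertible Dm := Matrix.fromBlocksZero₂₁Invertible All 0 Arr
  letI : Invertible M := hM.isUnit.invertible
  letI : Invertible (M.submatrix e e) := Matrix.submatrixEquivInvertible M e e
  letI : Invertible (fromBlocks A B C Dm) := hsub ▸ ‹Invertible (M.submatrix e e)›
  letI : Invertible (A - B * ⅟Dm * C) :=
    Matrix.invertibleOfFromBlocks₂₂Invertible A B C Dm
  -- the inverse of `Dm`
  have hDminv : Dm⁻¹ = fromBlocks All⁻¹ 0 0 Arr⁻¹ := by
    rw [hDm, Matrix.inv_fromBlocks_zero₂₁_of_isUnit_iff All 0 Arr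
      (by simp [hAllpd.isUnit, hArrpd.isUnit])]
    simp
  -- the Schur complement
  have hSchur : A - B * Dm⁻¹ * C = A - Bl * All⁻¹ * Cl - Br * Arr⁻¹ * Cr := by
    rw [hDminv, hB, hC, fromCols_mul_fromBlocks, fromCols_mul_fromRows]
    simp only [Matrix.mul_zero, Matrix.zero_mul, add_zero, zero_add]
    rw [sub_sub]
  -- block ₁₁ of the inverse
  have hblock : ((fromBlocks A B C Dm)⁻¹).toBlocks₁₁ = (A - B * Dm⁻¹ * C)⁻¹ := by
    rw [← invOf_eq_nonsing_inv, Matrix.invOf_fromBlocks₂₂_eq, toBlocks_fromBlocks₁₁,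
      invOf_eq_nonsing_inv, invOf_eq_nonsing_inv Dm]
  have hLHS : finsetBlock M⁻¹ D D = ((M.submatrix e e)⁻¹).toBlocks₁₁ := by
    rw [Matrix.inv_submatrix_equiv]
    rfl
  rw [hLHS, hsub, hblock, hSchur]
end

section
/- Let x ∈ ℝ and let z, z′ ∈ ℍ = {w ∈ ℂ : Im w > 0} with z ≠ z′. Let a, b be ℍ-valued functions of t ∈ [0, T) with a(0) = z, b(0) = z′, such that a has derivative 2/(z − x) at t = 0 and b has derivative 2/(z′ − x) at t = 0 (the chordal Loewner equation with driving point x at time 0). Define G(w, w′) = −(1/2π) log| (w − w′)/(w − conj(w′)) | and P(w) = −(1/π) Im(1/(w − x)). Then t ↦ G(a(t), b(t)) is differentiable at t = 0 with derivative equal to −2π · P(z) · P(z′). -/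
open Complex

lemma log_abs_deriv {f : ℝ → ℂ} {d : ℂ} {s : Set ℝ} {t : ℝ}
    (hf : HasDerivWithinAt f d s t) (h0 : f t ≠ 0) :
    HasDerivWithinAt (fun u => Real.log (‖f u‖)) ((d / f t).re) s t := by
  have hre : HasDerivWithinAt (fun u => (f u).re) d.re s t := by
    have := (Complex.reCLM.hasFDerivAt.comp_hasDerivWithinAt t hf)
    simp at this
    exact this
  have him : HasDerivWithinAt (fun u => (f u).im) d.im s t := by
    have := (Complex.imCLM.hasFDerivAt.comp_hasDerivWithinAt t hf)
    simp at this
    exact this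
  have hsq : HasDerivWithinAt (fun u => (f u).re^2 + (f u).im^2)
      (2*(f t).re*d.re + 2*(f t).im*d.im) s t := by
    have := (hre.pow 2).add (him.pow 2)
    convert this using 1
    · rfl
    · rfl
    · rfl
    ring
  have hns : (f t).re^2 + (f t).im^2 ≠ 0 := by
    have := Complex.normSq_pos.mpr h0
    rw [Complex.normSq_apply] at this
    nlinarith
  have hlog := (Real.hasDerivAt_log hns).comp_hasDerivWithinAt t hsq
  have hfin := hlog.div_const 2
  have heq : ∀ u, Real.log (‖f u‖) = Real.log ((f u).re^2 + (f u).im^2) / 2 := by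
    intro u
    rw [Complex.norm_def, Real.log_sqrt (Complex.normSq_nonneg _), Complex.normSq_apply]
    ring_nf
  have := hfin.congr (fun u _ => (heq u)) (heq t)
  convert this using 1
  · rfl
  · rfl
  rw [Complex.div_re, Complex.normSq_apply]
  have hmul : (f t).re * (f t).re + (f t).im * (f t).im = (f t).re^2 + (f t).im^2 := by ring
  rw [hmul]
  field_simp [hns]

/-- Variation of the Green function of the upper half-plane under growth of an
infinitesimal hull at the boundary point `x`: if `a, b` are `ℍ`-valued on `[0, T)` with
`a(0) = z`, `b(0) = z′` and one-sided derivatives `2/(z − x)`, `2/(z′ − x)` at `t = 0`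
(the chordal Loewner equation), then `t ↦ G(a(t), b(t))` has one-sided derivative
`−2π P(z) P(z′)` at `t = 0`, where `G(w,w′) = −(1/2π) log|(w − w′)/(w − conj w′)|` and
`P(w) = −(1/π) Im(1/(w − x))`. -/
theorem stmt_13 (x : ℝ) (z z' : ℂ) (hz : 0 < z.im) (hz' : 0 < z'.im) (hne : z ≠ z')
    (T : ℝ) (hT : 0 < T) (a b : ℝ → ℂ)
    (ha0 : a 0 = z) (hb0 : b 0 = z')
    (haH : ∀ t ∈ Set.Ico (0:ℝ) T, 0 < (a t).im)
    (hbH : ∀ t ∈ Set.Ico (0:ℝ) T, 0 < (b t).im)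
    (ha : HasDerivWithinAt a (2 / (z - (x : ℂ))) (Set.Ico 0 T) 0)
    (hb : HasDerivWithinAt b (2 / (z' - (x : ℂ))) (Set.Ico 0 T) 0) :
    HasDerivWithinAt
      (fun t => -(1 / (2 * Real.pi)) *
        Real.log ‖(a t - b t) / (a t - (starRingEnd ℂ) (b t))‖)
      (-2 * Real.pi * (-(1 / Real.pi) * (1 / (z - (x : ℂ))).im) *
        (-(1 / Real.pi) * (1 / (z' - (x : ℂ))).im))
      (Set.Ico 0 T) 0 := by
  set s : Set ℝ := Set.Ico (0:ℝ) T with hs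
  have hs0 : (0:ℝ) ∈ s := ⟨le_refl 0, hT⟩
  -- nonvanishing facts
  have hzx : z - (x:ℂ) ≠ 0 := by
    intro h
    have := congrArg Complex.im h
    simp at this
    linarith
  have hzx' : z' - (x:ℂ) ≠ 0 := by
    intro h
    have := congrArg Complex.im h
    simp at this
    linarith
  have hzz : z - z' ≠ 0 := sub_ne_zero.mpr hne
  have hzc : z - (starRingEnd ℂ) z' ≠ 0 := by
    intro h
    have := congrArg Complex.im h
    simp at this
    linarith
  have hcz : (starRingEnd ℂ) z' - (x:ℂ) ≠ 0 := by
    intro h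
    have := congrArg Complex.im h
    simp at this
    linarith
  have habc : ∀ t ∈ s, a t - (starRingEnd ℂ) (b t) ≠ 0 := by
    intro t ht h
    have := congrArg Complex.im h
    simp at this
    have h1 := haH t ht
    have h2 := hbH t ht
    linarith
  -- derivative of conj b
  have hbc : HasDerivWithinAt (fun t => (starRingEnd ℂ) (b t))
      ((starRingEnd ℂ) (2 / (z' - (x:ℂ)))) s 0 := by
    have := (Complex.conjCLE.toContinuousLinearEquiv.toContinuousLinearMap.hasFDerivAt.comp_hasDerivWithinAt 0 hb)
    simp at this ⊢
    exact this
  -- two log derivatives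
  have f1 : HasDerivWithinAt (fun t => a t - b t) (2 / (z - (x:ℂ)) - 2 / (z' - (x:ℂ))) s 0 :=
    ha.sub hb
  have f10 : a 0 - b 0 = z - z' := by rw [ha0, hb0]
  have f1ne : a 0 - b 0 ≠ 0 := by rw [f10]; exact hzz
  have h1 := log_abs_deriv f1 f1ne
  rw [f10] at h1
  have f2 : HasDerivWithinAt (fun t => a t - (starRingEnd ℂ) (b t))
      (2 / (z - (x:ℂ)) - (starRingEnd ℂ) (2 / (z' - (x:ℂ)))) s 0 := ha.sub hbc
  have f20 : a 0 - (starRingEnd ℂ) (b 0) = z - (starRingEnd ℂ) z' := by rw [ha0, hb0]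
  have f2ne : a 0 - (starRingEnd ℂ) (b 0) ≠ 0 := by rw [f20]; exact hzc
  have h2 := log_abs_deriv f2 f2ne
  rw [f20] at h2
  have hcomb := (h1.sub h2).const_mul (-(1 / (2 * Real.pi)))
  -- eventual equality
  have hcont : ContinuousWithinAt (fun t => a t - b t) s 0 := f1.continuousWithinAt
  have hev1 : ∀ᶠ t in nhdsWithin 0 s, a t - b t ≠ 0 := by
    have : {w : ℂ | w ≠ 0} ∈ nhds (a 0 - b 0) := by
      rw [f10]
      exact isOpen_ne.mem_nhds hzz
    exact hcont this
  have hev2 : ∀ᶠ t in nhdsWithin 0 s, t ∈ s := self_mem_nhdsWithin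
  have heqG : ∀ t, a t - b t ≠ 0 → t ∈ s →
      -(1 / (2 * Real.pi)) *
        Real.log (‖(a t - b t) / (a t - (starRingEnd ℂ) (b t))‖) =
      -(1 / (2 * Real.pi)) *
        (Real.log (‖a t - b t‖) - Real.log (‖a t - (starRingEnd ℂ) (b t)‖)) := by
    intro t h1t h2t
    rw [norm_div, Real.log_div (norm_ne_zero_iff.mpr h1t) (norm_ne_zero_iff.mpr (habc t h2t))]
  have hfinal := hcomb.congr_of_eventuallyEq
    (by
      filter_upwards [hev1, hev2] with t h1t h2t
      exact heqG t h1t h2t)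
    (heqG 0 f1ne hs0)
  convert hfinal using 1
  · rfl
  · rfl
  -- value computation
  have e1 : (2 / (z - (x:ℂ)) - 2 / (z' - (x:ℂ))) / (z - z')
      = -2 * ((z - (x:ℂ))⁻¹ * (z' - (x:ℂ))⁻¹) := by
    field_simp
    ring
  have e2 : (2 / (z - (x:ℂ)) - (starRingEnd ℂ) (2 / (z' - (x:ℂ)))) / (z - (starRingEnd ℂ) z')
      = -2 * ((z - (x:ℂ))⁻¹ * ((starRingEnd ℂ) z' - (x:ℂ))⁻¹) := by
    rw [map_div₀, map_ofNat, map_sub, Complex.conj_ofReal]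
    field_simp
    ring
  rw [e1, e2]
  have hu : (1 / (z - (x:ℂ))).im = ((z - (x:ℂ))⁻¹).im := by rw [one_div]
  have hv : (1 / (z' - (x:ℂ))).im = ((z' - (x:ℂ))⁻¹).im := by rw [one_div]
  rw [hu, hv]
  have hconjinv : (((starRingEnd ℂ) z' - (x:ℂ))⁻¹) = (starRingEnd ℂ) ((z' - (x:ℂ))⁻¹) := by
    rw [map_inv₀, map_sub, Complex.conj_ofReal]
  rw [hconjinv]
  set u := (z - (x:ℂ))⁻¹
  set v := (z' - (x:ℂ))⁻¹
  simp only [Complex.mul_re, Complex.mul_im, Complex.conj_re, Complex.conj_im,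
    Complex.neg_re, Complex.neg_im, Complex.ofReal_re, Complex.ofReal_im, Complex.re_ofNat, Complex.im_ofNat]
  have hπ := Real.pi_ne_zero
  field_simp
  ring
end
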